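/- Let G be a finite group whose order is squarefree, and let k(G) denote the number of conjugacy classes of G. Then |G| ≤ k(G)³. -/

import Mathlib

open Subgroup
open scoped commutatorElement

lemma aux_comm_of_commutator_central {H : Type*} [Group H] [Finite H]
    (hsf : Squarefree (Nat.card H))
    (hc : ∀ x y z : H, ⁅x, y⁆ * z = z * ⁅x, y⁆) (x y : H) : x * y = y * x := by
  have key : ∀ a b : H, ⁅a * b, y⁆ = ⁅a, y⁆ * ⁅b, y⁆ := by
    intro a b
    have hcb : ∀ c : H, (b * y * b⁻¹ * y⁻¹) * c = c * (b * y * b⁻¹ * y⁻¹) := fun c => by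
      simpa [commutatorElement_def] using hc b y c
    simp only [commutatorElement_def]
    rw [show a * b * y * (a * b)⁻¹ * y⁻¹ = a * ((b * y * b⁻¹ * y⁻¹) * (y * a⁻¹ * y⁻¹)) by group,
      hcb, show a * ((y * a⁻¹ * y⁻¹) * (b * y * b⁻¹ * y⁻¹))
        = (a * y * a⁻¹ * y⁻¹) * (b * y * b⁻¹ * y⁻¹) by group]
  let f : H →* H :=
    { toFun := fun a => ⁅a, y⁆
      map_one' := by simp [commutatorElement_def]
      map_mul' := key }
  have hrk : f.range ≤ f.ker := by
    rintro - ⟨a, rfl⟩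
    have : ⁅⁅a, y⁆, y⁆ = 1 := commutatorElement_eq_one_iff_mul_comm.mpr (hc a y y)
    simpa [f, MonoidHom.mem_ker] using this
  have hcard : Nat.card f.range * Nat.card f.ker = Nat.card H := by
    rw [← Nat.card_congr (QuotientGroup.quotientKerEquivRange f).toEquiv]
    exact (Subgroup.card_eq_card_quotient_mul_card_subgroup _).symm
  have hdvd : Nat.card f.range * Nat.card f.range ∣ Nat.card H := by
    rw [← hcard]
    exact mul_dvd_mul_left _ (Subgroup.card_dvd_of_le hrk)
  have h1 : Nat.card f.range = 1 := Nat.isUnit_iff.mp (hsf _ hdvd)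
  have : f x = 1 := by
    have := Subgroup.card_eq_one.mp h1
    have hx : f x ∈ f.range := ⟨x, rfl⟩
    rw [this] at hx
    simpa using hx
  have : ⁅x, y⁆ = 1 := this
  exact (commutatorElement_eq_one_iff_mul_comm.mp this)


lemma aux_sq_card_le {G : Type*} [Group G] [Finite G] (A : Subgroup G)
    (hA : ∀ x ∈ A, ∀ y ∈ A, x * y = y * x) :
    Nat.card A * Nat.card A ≤ Nat.card (ConjClasses G) * Nat.card G := by
  rw [← card_comm_eq_card_conjClasses_mul_card]
  have hinj : Function.Injective
      (fun p : A × A => (⟨((p.1 : G), (p.2 : G)), hA _ p.1.2 _ p.2.2⟩ :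
        {p : G × G // Commute p.1 p.2})) := by
    rintro ⟨a, b⟩ ⟨c, d⟩ h
    replace h : (a : G) = c ∧ (b : G) = d := Prod.mk.inj (congrArg Subtype.val h)
    simp [Prod.ext_iff, Subtype.ext_iff, h.1, h.2]
  calc Nat.card A * Nat.card A = Nat.card (A × A) := (Nat.card_prod _ _).symm
    _ ≤ _ := Nat.card_le_card_of_injective _ hinj

lemma aux_ab_le {G : Type*} [Group G] [Finite G] :
    Nat.card (Abelianization G) ≤ Nat.card (ConjClasses G) := by
  have h : ∀ a b : G, IsConj a b → Abelianization.of a = Abelianization.of b := by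
    rintro a b ⟨c, hc⟩
    have hb : b = ↑c * a * (↑c)⁻¹ := by
      have : (c : G) * a = b * c := hc
      rw [this]; group
    rw [hb, map_mul, map_mul, mul_comm, ← mul_assoc, ← map_mul]
    simp
  apply Nat.card_le_card_of_surjective
    (f := fun c : ConjClasses G => Quotient.liftOn c Abelianization.of h)
  intro x
  obtain ⟨g, rfl⟩ := QuotientGroup.mk_surjective (s := commutator G) x
  exact ⟨ConjClasses.mk g, rfl⟩

open Subgroup MonoidHom

universe u

theorem aux_solvable : ∀ n : ℕ, ∀ (G : Type u) (_ : Group G) (_ : Finite G),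
    Nat.card G = n → Squarefree n → Group.IsSolvable G := by
  intro n
  induction n using Nat.strong_induction_on with
  | _ n IH =>
    intro G _ _ hn hsf
    rcases eq_or_ne n 1 with rfl | h1
    · have : Nat.card G = 1 := hn
      have : Subsingleton G := (Nat.card_eq_one_iff_unique.mp this).1
      exact inferInstance
    have hn0 : n ≠ 0 := hsf.ne_zero
    set p := n.minFac with hpdef
    have hp : p.Prime := Nat.minFac_prime h1
    haveI : Fact p.Prime := ⟨hp⟩
    obtain ⟨P⟩ : Nonempty (Sylow p G) := Sylow.nonempty
    -- card P = p
    have hfact : (Nat.card G).factorization p = 1 := by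
      rw [hn]
      refine le_antisymm ((Nat.squarefree_iff_factorization_le_one hn0).mp hsf p) ?_
      exact (Nat.Prime.factorization_pos_of_dvd hp hn0 n.minFac_dvd)
    have hcardP : Nat.card P = p := by
      rw [Sylow.card_eq_multiplicity, hfact, pow_one]
    haveI : IsCyclic P := isCyclic_of_prime_card hcardP
    -- normalizer ≤ centralizer
    set f := (P : Subgroup G).normalizerMonoidHom with hfdef
    have hrange1 : Nat.card f.range = 1 := by
      by_contra hne
      have hMA : Nat.card (MulAut P) = p - 1 := by
        rw [IsCyclic.card_mulAut, hcardP, Nat.totient_prime hp]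
      have hd1 : Nat.card f.range ∣ p - 1 := hMA ▸ Subgroup.card_subgroup_dvd_card _
      have hd2 : Nat.card f.range ∣ n := by
        have e1 : Nat.card f.range = Nat.card (Subgroup.normalizer ((P : Subgroup G) : Set G) ⧸ f.ker) :=
          (Nat.card_congr (QuotientGroup.quotientKerEquivRange f).toEquiv).symm
        have e2 : Nat.card (Subgroup.normalizer ((P : Subgroup G) : Set G) ⧸ f.ker) ∣
            Nat.card (Subgroup.normalizer ((P : Subgroup G) : Set G)) :=
          ⟨Nat.card f.ker, Subgroup.card_eq_card_quotient_mul_card_subgroup _⟩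
        rw [e1]
        exact e2.trans (hn ▸ Subgroup.card_subgroup_dvd_card _)
      set q := (Nat.card f.range).minFac with hqdef
      have hq : q.Prime := Nat.minFac_prime hne
      have hp2 : 2 ≤ p := hp.two_le
      have hqp : q ≤ p - 1 := Nat.le_of_dvd (by omega) ((Nat.minFac_dvd _).trans hd1)
      have hpq : p ≤ q := Nat.minFac_le_of_dvd hq.two_le ((Nat.minFac_dvd _).trans hd2)
      omega
    have hkertop : f.ker = ⊤ := by
      have hbot : f.range = ⊥ := Subgroup.card_eq_one.mp hrange1
      rw [eq_top_iff']
      intro x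
      rw [MonoidHom.mem_ker]
      have : f x ∈ f.range := ⟨x, rfl⟩
      rwa [hbot, Subgroup.mem_bot] at this
    have hP : Subgroup.normalizer ((P : Subgroup G) : Set G) ≤ Subgroup.centralizer (P : Set G) := by
      rw [Subgroup.normalizerMonoidHom_ker] at hkertop
      exact Subgroup.subgroupOf_eq_top.mp hkertop
    -- Burnside
    set K := (MonoidHom.transferSylow P hP).ker with hKdef
    have hcompl := MonoidHom.ker_transferSylow_isComplement' P hP
    have hcardmul : Nat.card K * Nat.card P = Nat.card G := hcompl.card_mul
    have hKpos : 0 < Nat.card K := Nat.card_pos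
    have hKdvd : Nat.card K ∣ n := by
      rw [← hn, ← hcardmul]; exact Dvd.intro _ rfl
    have hKlt : Nat.card K < n := by
      have h2 : 2 ≤ Nat.card P := by rw [hcardP]; exact hp.two_le
      calc Nat.card K < Nat.card K * 2 := by omega
        _ ≤ Nat.card K * Nat.card P := Nat.mul_le_mul_left _ h2
        _ = n := by rw [hcardmul, hn]
    haveI hKsolv : Group.IsSolvable K := IH _ hKlt K inferInstance inferInstance rfl (hsf.squarefree_of_dvd hKdvd)
    haveI hPsolv : Group.IsSolvable P := by
      have hcomm : ∀ a b : P, a * b = b * a := fun a b =>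
        (IsCyclic.commGroup (α := P)).mul_comm a b
      exact isSolvable_of_comm hcomm
    refine solvable_of_ker_le_range K.subtype (MonoidHom.transferSylow P hP) ?_
    rw [Subgroup.range_subtype]

lemma aux_isCyclic {H : Type*} [Group H] [Finite H] (hcomm : ∀ a b : H, a * b = b * a)
    (hsf : Squarefree (Nat.card H)) : IsCyclic H := by
  letI : CommGroup H := { (inferInstance : Group H) with mul_comm := hcomm }
  have hn0 : Nat.card H ≠ 0 := Nat.card_pos.ne'
  have he0 : Monoid.exponent H ≠ 0 := Monoid.ExponentExists.of_finite.exponent_ne_zero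
  have hdvd : Monoid.exponent H ∣ Nat.card H := Group.exponent_dvd_nat_card
  have hdvd2 : Nat.card H ∣ Monoid.exponent H := by
    rw [← Nat.factorization_le_iff_dvd hn0 he0]
    intro p
    rcases Nat.eq_zero_or_pos ((Nat.card H).factorization p) with h0 | hpos
    · simp [h0]
    have hp : p.Prime := Nat.prime_of_mem_primeFactors
      (Nat.support_factorization _ ▸ Finsupp.mem_support_iff.mpr hpos.ne')
    have hpd : p ∣ Nat.card H := Nat.dvd_of_factorization_pos hpos.ne'
    haveI : Fact p.Prime := ⟨hp⟩
    obtain ⟨g, hg⟩ := exists_prime_orderOf_dvd_card' p hpd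
    have : p ∣ Monoid.exponent H := hg ▸ Monoid.order_dvd_exponent g
    have h1 : (Nat.card H).factorization p ≤ 1 :=
      (Nat.squarefree_iff_factorization_le_one hn0).mp hsf p
    have h2 : 1 ≤ (Monoid.exponent H).factorization p :=
      (Nat.Prime.factorization_pos_of_dvd hp he0 this)
    omega
  have hexp : Monoid.exponent H = Nat.card H := Nat.dvd_antisymm hdvd hdvd2
  obtain ⟨g, hg⟩ := Monoid.exists_orderOf_eq_exponent (G := H) (by exact Monoid.ExponentExists.of_finite)
  exact isCyclic_of_orderOf_eq_card g (by rw [hg, hexp])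

lemma aux_mulAut_comm {H : Type*} [Group H] (h : IsCyclic H) (σ τ : MulAut H) :
    σ * τ = τ * σ := by
  obtain ⟨g, hg⟩ := h.exists_generator
  have key : σ (τ g) = τ (σ g) := by
    obtain ⟨a, ha⟩ := hg (σ g)
    obtain ⟨b, hb⟩ := hg (τ g)
    rw [← ha, ← hb, map_zpow, map_zpow, ← ha, ← hb, ← zpow_mul, ← zpow_mul, mul_comm]
  ext x
  obtain ⟨k, rfl⟩ := hg x
  simp only [MulAut.mul_apply, map_zpow]
  rw [key]

open Subgroup


lemma aux_min_normal {Q : Type u} [Group Q] [Finite Q] [Group.IsSolvable Q]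
    (C : Subgroup Q) (hC : C.Normal) (hCbot : C ≠ ⊥) :
    ∃ D : Subgroup Q, D.Normal ∧ D ≤ C ∧ D ≠ ⊥ ∧ ∀ x ∈ D, ∀ y ∈ D, x * y = y * x := by
  classical
  let P : ℕ → Prop := fun m => ∃ D : Subgroup Q, D.Normal ∧ D ≤ C ∧ D ≠ ⊥ ∧ Nat.card D = m
  have hP : ∃ m, P m := ⟨Nat.card C, C, hC, le_rfl, hCbot, rfl⟩
  obtain ⟨D, hDn, hDC, hDbot, hDcard⟩ := Nat.find_spec hP
  refine ⟨D, hDn, hDC, hDbot, ?_⟩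
  haveI := hDn
  have hEbot : (⁅D, D⁆ : Subgroup Q) = ⊥ := by
    by_contra hne
    have hED : (⁅D, D⁆ : Subgroup Q) ≤ D :=
      Subgroup.commutator_le.mpr fun g₁ h₁ g₂ h₂ => by
        rw [commutatorElement_def]
        exact mul_mem (mul_mem (mul_mem h₁ h₂) (inv_mem h₁)) (inv_mem h₂)
    have hmap : Subgroup.map D.subtype (_root_.commutator ↥D) = ⁅D, D⁆ := by
      rw [_root_.commutator_def, Subgroup.map_commutator]
      congr 1 <;> rw [← MonoidHom.range_eq_map, Subgroup.range_subtype]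
    have hMne : _root_.commutator ↥D ≠ ⊤ := by
      intro htop
      have hds : ∀ k, derivedSeries ↥D k = ⊤ := by
        intro k
        induction k with
        | zero => rfl
        | succ k ih => rw [derivedSeries_succ, ih]; exact htop
      obtain ⟨nn, hnn⟩ := (isSolvable_def ↥D).mp inferInstance
      rw [hds nn] at hnn
      apply hDbot
      rw [eq_bot_iff]
      intro x hx
      have hmem : (⟨x, hx⟩ : ↥D) ∈ (⊤ : Subgroup ↥D) := Subgroup.mem_top _
      rw [hnn, Subgroup.mem_bot] at hmem
      have : x = 1 := congrArg Subtype.val hmem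
      simpa [this] using Subgroup.one_mem _
    have hcardmap : Nat.card (⁅D, D⁆ : Subgroup Q) = Nat.card (_root_.commutator ↥D) := by
      rw [← hmap]
      exact (Nat.card_congr
        (Subgroup.equivMapOfInjective _ _ (Subgroup.subtype_injective D)).toEquiv).symm
    have hlt : Nat.card (_root_.commutator ↥D) < Nat.card D :=
      lt_of_le_of_ne (Subgroup.card_le_card_group _)
        fun heq => hMne (Subgroup.eq_top_of_card_eq _ heq)
    have hPm : P (Nat.card (⁅D, D⁆ : Subgroup Q)) :=
      ⟨⁅D, D⁆, inferInstance, hED.trans hDC, hne, rfl⟩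
    have := Nat.find_min' hP hPm
    omega
  intro x hx y hy
  have hmem := Subgroup.commutator_mem_commutator hx hy
  rw [hEbot, Subgroup.mem_bot] at hmem
  exact commutatorElement_eq_one_iff_mul_comm.mp hmem
lemma aux_commutator_comm {G : Type u} [Group G] [Finite G]
    (hsf : Squarefree (Nat.card G)) :
    ∀ x ∈ commutator G, ∀ y ∈ commutator G, x * y = y * x := by
  classical
  haveI : Group.IsSolvable G := aux_solvable (Nat.card G) G ‹_› ‹_› rfl hsf
  let P : ℕ → Prop := fun m => ∃ A : Subgroup G,
    A.Normal ∧ (∀ x ∈ A, ∀ y ∈ A, x * y = y * x) ∧ Nat.card A = m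
  have hP1 : P 1 := ⟨⊥, inferInstance, by simp [Subgroup.mem_bot], Subgroup.card_bot⟩
  have hle : ∀ m, P m → m ≤ Nat.card G := by
    rintro m ⟨A, -, -, rfl⟩
    exact Subgroup.card_le_card_group A
  set N := Nat.findGreatest P (Nat.card G) with hNdef
  have hPN : P N := Nat.findGreatest_spec (hle 1 hP1) hP1
  obtain ⟨A, hAn, hAcomm, hAcard⟩ := hPN
  haveI := hAn
  have hmax : ∀ B : Subgroup G, B.Normal → (∀ x ∈ B, ∀ y ∈ B, x * y = y * x) →
      Nat.card B ≤ N :=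
    fun B hBn hBc => Nat.le_findGreatest (Subgroup.card_le_card_group B) ⟨B, hBn, hBc, rfl⟩
  set C := Subgroup.centralizer (A : Set G) with hCdef
  have hAC : A ≤ C := fun a ha => Subgroup.mem_centralizer_iff.mpr fun h hh => hAcomm h hh a ha
  have hCn : C.Normal := by
    constructor
    intro c hc g
    rw [hCdef, Subgroup.mem_centralizer_iff] at hc ⊢
    intro h hh
    have hh' : g⁻¹ * h * g ∈ A := by simpa using hAn.conj_mem h hh g⁻¹
    have hkey := hc _ hh'
    calc h * (g * c * g⁻¹) = g * ((g⁻¹ * h * g) * c) * g⁻¹ := by group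
      _ = g * (c * (g⁻¹ * h * g)) * g⁻¹ := by rw [hkey]
      _ = g * c * g⁻¹ * h := by group
  have hCA : C ≤ A := by
    by_contra hnot
    obtain ⟨c, hcC, hcA⟩ := SetLike.not_le_iff_exists.mp hnot
    set π := QuotientGroup.mk' A with hπdef
    have hsfQ : Squarefree (Nat.card (G ⧸ A)) := hsf.squarefree_of_dvd
      ⟨Nat.card A, Subgroup.card_eq_card_quotient_mul_card_subgroup A⟩
    set Cbar := Subgroup.map π C with hCbardef
    have hCbarn : Cbar.Normal := hCn.map π (QuotientGroup.mk'_surjective A)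
    have hCbarbot : Cbar ≠ ⊥ := by
      intro hb
      have hmem : π c ∈ Cbar := Subgroup.mem_map_of_mem π hcC
      rw [hb, Subgroup.mem_bot] at hmem
      exact hcA ((QuotientGroup.eq_one_iff c).mp hmem)
    obtain ⟨Dbar, hDn, hDCbar, hDbot, hDcomm⟩ := aux_min_normal Cbar hCbarn hCbarbot
    set D := Subgroup.comap π Dbar with hDdef
    have hDnormal : D.Normal := hDn.comap π
    have hAD : A ≤ D := by
      intro a ha
      show π a ∈ Dbar
      have h1 : π a = 1 := (QuotientGroup.eq_one_iff a).mpr ha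
      rw [h1]
      exact Dbar.one_mem
    have hDC' : D ≤ C := by
      have hcm : Subgroup.comap π Cbar = C := by
        rw [hCbardef, Subgroup.comap_map_eq, QuotientGroup.ker_mk']
        exact sup_eq_left.mpr hAC
      rw [← hcm]
      exact Subgroup.comap_mono hDCbar
    have hADne : A ≠ D := by
      intro he
      apply hDbot
      rw [eq_bot_iff]
      intro q hq
      obtain ⟨g, rfl⟩ := QuotientGroup.mk'_surjective A q
      have hgD : g ∈ D := hq
      rw [← he] at hgD
      rw [Subgroup.mem_bot]
      exact (QuotientGroup.eq_one_iff g).mpr hgD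
    have hsfD : Squarefree (Nat.card ↥D) :=
      hsf.squarefree_of_dvd (Subgroup.card_subgroup_dvd_card D)
    have hDcommAll : ∀ x ∈ D, ∀ y ∈ D, x * y = y * x := by
      have hc2 : ∀ x y z : ↥D, ⁅x, y⁆ * z = z * ⁅x, y⁆ := by
        intro x y z
        have hxyA : ⁅(x : G), (y : G)⁆ ∈ A := by
          apply (QuotientGroup.eq_one_iff _).mp
          show π ⁅(x : G), (y : G)⁆ = 1
          rw [map_commutatorElement]
          exact commutatorElement_eq_one_iff_mul_comm.mpr (hDcomm _ x.2 _ y.2)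
        have hz : (z : G) ∈ C := hDC' z.2
        have hres := Subgroup.mem_centralizer_iff.mp hz _ hxyA
        exact Subtype.ext hres
      intro x hx y hy
      exact congrArg Subtype.val (aux_comm_of_commutator_central hsfD hc2 ⟨x, hx⟩ ⟨y, hy⟩)
    have hlt : N < Nat.card D := by
      have hle' : Nat.card A ≤ Nat.card D := Subgroup.card_le_of_le hAD
      have hne : Nat.card A ≠ Nat.card D := by
        intro he
        apply hADne
        have h1 : Nat.card (A.subgroupOf D) = Nat.card D := by
          rw [Nat.card_congr (Subgroup.subgroupOfEquivOfLe hAD).toEquiv, he]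
        have h2 := Subgroup.eq_top_of_card_eq _ h1
        exact le_antisymm hAD (Subgroup.subgroupOf_eq_top.mp h2)
      omega
    have := hmax D hDnormal hDcommAll
    omega
  have hCeq : C = A := le_antisymm hCA hAC
  have hAcyc : IsCyclic ↥A := aux_isCyclic (fun a b => Subtype.ext (hAcomm _ a.2 _ b.2))
    (hsf.squarefree_of_dvd (Subgroup.card_subgroup_dvd_card A))
  have hGA : commutator G ≤ A := by
    rw [_root_.commutator_def]
    apply Subgroup.commutator_le.mpr
    intro g hg h hh
    have h1 : MulAut.conjNormal (H := A) ⁅g, h⁆ = 1 := by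
      rw [map_commutatorElement]
      exact commutatorElement_eq_one_iff_mul_comm.mpr (aux_mulAut_comm hAcyc _ _)
    rw [← hCeq, Subgroup.mem_centralizer_iff]
    intro a ha
    have h2 : ⁅g, h⁆ * a * ⁅g, h⁆⁻¹ = a := by
      have := congrArg (fun σ : MulAut ↥A => ((σ ⟨a, ha⟩ : ↥A) : G)) h1
      simpa only [MulAut.conjNormal_apply, MulAut.one_apply] using this
    calc a * ⁅g, h⁆ = (⁅g, h⁆ * a * ⁅g, h⁆⁻¹) * ⁅g, h⁆ := by rw [h2]
      _ = ⁅g, h⁆ * a := by group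
  intro x hx y hy
  exact hAcomm x (hGA hx) y (hGA hy)

/-- **Groups of squarefree order satisfy `|G| ≤ k(G)³`.**
If `G` is a finite group whose order is squarefree and `k(G)` denotes its number of
conjugacy classes, then `|G| ≤ k(G)^3`. -/
theorem card_le_card_conjClasses_cube (G : Type*) [Group G] [Finite G]
    (h : Squarefree (Nat.card G)) :
    Nat.card G ≤ (Nat.card (ConjClasses G)) ^ 3 := by
  have hcomm := aux_commutator_comm h
  set k := Nat.card (ConjClasses G) with hk
  set c := Nat.card (commutator G) with hc
  set a := Nat.card (G ⧸ commutator G) with ha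
  have hn : Nat.card G = a * c := Subgroup.card_eq_card_quotient_mul_card_subgroup _
  have h1 : c * c ≤ k * Nat.card G := aux_sq_card_le (commutator G) hcomm
  have h2 : a ≤ k := aux_ab_le (G := G)
  have hpos : 0 < Nat.card G := Nat.card_pos
  have hmain : Nat.card G * Nat.card G ≤ k ^ 3 * Nat.card G := by
    calc Nat.card G * Nat.card G = (a * a) * (c * c) := by rw [hn]; ring
      _ ≤ (k * k) * (k * Nat.card G) := Nat.mul_le_mul (Nat.mul_le_mul h2 h2) h1
      _ = k ^ 3 * Nat.card G := by ring
  exact Nat.le_of_mul_le_mul_right hmain hpos
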